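/- For all integers l ≥ 1 and m ≥ 2, the polynomial G_{l,m} = x·(y·x^l + z^{l+1})^m − z^{(l+1)·m + 1} in ℂ[x,y,z] is homogeneous of degree l·m + m + 1 and is irreducible in ℂ[x,y,z]. -/

import Mathlib

set_option maxRecDepth 8000
set_option maxHeartbeats 1000000

open MvPolynomial

/-- The polynomial `G_{l,m} = x·(y·x^l + z^{l+1})^m − z^{(l+1)·m + 1}` in `ℂ[x,y,z]`,
with variables `x = X 0`, `y = X 1`, `z = X 2`. -/
noncomputable def Gpoly (l m : ℕ) : MvPolynomial (Fin 3) ℂ :=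
  X 0 * (X 1 * X 0 ^ l + X 2 ^ (l + 1)) ^ m - X 2 ^ ((l + 1) * m + 1)

namespace GpolyAux

open Polynomial

noncomputable def lemAequiv : MvPolynomial (Fin 2) ℂ ≃ₐ[ℂ] Polynomial (Polynomial ℂ) :=
  (MvPolynomial.finSuccEquiv ℂ 1).trans <| Polynomial.mapAlgEquiv <|
    (MvPolynomial.finSuccEquiv ℂ 0).trans
      (Polynomial.mapAlgEquiv (MvPolynomial.isEmptyAlgEquiv ℂ (Fin 0)))

lemma lemA_poly (a b : ℕ) (ha : Odd a) (hco : Nat.Coprime a b) :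
    Irreducible ((Polynomial.X : Polynomial (Polynomial ℂ)) ^ a
      - Polynomial.C (Polynomial.X ^ b)) := by
  have ha0 : a ≠ 0 := by rintro rfl; simp at ha
  have hmon : ((Polynomial.X : Polynomial (Polynomial ℂ)) ^ a
      - Polynomial.C (Polynomial.X ^ b)).Monic := monic_X_pow_sub_C _ ha0
  rw [hmon.irreducible_iff_irreducible_map_fraction_map (K := FractionRing (Polynomial ℂ))]
  rw [Polynomial.map_sub, Polynomial.map_pow, Polynomial.map_X, Polynomial.map_C]
  apply X_pow_sub_C_irreducible_of_odd ha
  intro p hp hpa u hu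
  have hint : IsIntegral (Polynomial ℂ) u := by
    refine IsIntegral.of_pow hp.pos ?_
    rw [hu]; exact isIntegral_algebraMap
  obtain ⟨f, hf⟩ := IsIntegrallyClosed.isIntegral_iff.mp hint
  have hfp : f ^ p = Polynomial.X ^ b := by
    apply IsFractionRing.injective (Polynomial ℂ) (FractionRing (Polynomial ℂ))
    rw [map_pow, hf, hu]
  have hdeg : p * f.natDegree = b := by
    have := congrArg Polynomial.natDegree hfp
    rwa [Polynomial.natDegree_pow, Polynomial.natDegree_X_pow] at this
  have := Nat.dvd_gcd hpa ⟨f.natDegree, hdeg.symm⟩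
  rw [Nat.Coprime.gcd_eq_one hco] at this
  exact hp.one_lt.ne' (Nat.dvd_one.mp this)

lemma lemA (a b : ℕ) (ha : Odd a) (hco : Nat.Coprime a b) :
    Irreducible ((X 0) ^ a - (X 1) ^ b : MvPolynomial (Fin 2) ℂ) := by
  have h := lemA_poly a b ha hco
  rw [← MulEquiv.irreducible_iff lemAequiv.toMulEquiv]
  convert h using 1
  have h1 : (X (1:Fin 2) : MvPolynomial (Fin 2) ℂ) = X ((0:Fin 1).succ) := rfl
  simp [lemAequiv, h1, map_sub, map_pow, Polynomial.coe_mapAlgEquiv, AlgEquiv.trans_apply,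
    finSuccEquiv_X_zero, finSuccEquiv_X_succ, Polynomial.map_pow, Polynomial.map_C]

lemma lemB (a b : ℕ) (hco : Nat.Coprime a b) :
    Irreducible ((X 0) ^ a - (X 1) ^ b : MvPolynomial (Fin 2) ℂ) := by
  rcases Nat.even_or_odd a with hae | hao
  · have hbo : Odd b := by
      rcases Nat.even_or_odd b with hbe | h; swap; · exact h
      exfalso
      have : (2:ℕ) ∣ Nat.gcd a b := Nat.dvd_gcd hae.two_dvd hbe.two_dvd
      rw [Nat.Coprime.gcd_eq_one hco] at this; omega
    have h := lemA b a hbo hco.symm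
    have h2 := (MulEquiv.irreducible_iff (renameEquiv ℂ (Equiv.swap (0:Fin 2) 1)).toMulEquiv).mpr h
    have e : (renameEquiv ℂ (Equiv.swap (0:Fin 2) 1)).toMulEquiv ((X 0) ^ b - (X 1) ^ a)
        = ((X 1) ^ b - (X 0) ^ a : MvPolynomial (Fin 2) ℂ) := by
      show (renameEquiv ℂ (Equiv.swap (0:Fin 2) 1)) _ = _
      simp [map_sub, map_pow, rename_X]
    rw [e] at h2
    have e2 : ((X 0) ^ a - (X 1) ^ b : MvPolynomial (Fin 2) ℂ)
        = -((X 1) ^ b - (X 0) ^ a) := by ring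
    rw [e2]
    exact Associated.irreducible ⟨-1, by simp⟩ h2
  · exact lemA a b hao hco

noncomputable def shiftEquiv (k : ℕ) : MvPolynomial (Fin 2) ℂ ≃ₐ[ℂ] MvPolynomial (Fin 2) ℂ :=
  AlgEquiv.ofAlgHom (aeval ![X 0 + X 1 ^ k, X 1]) (aeval ![X 0 - X 1 ^ k, X 1])
    (by apply MvPolynomial.algHom_ext; intro i; fin_cases i <;>
          simp [AlgHom.comp_apply, map_sub, map_add, map_pow])
    (by apply MvPolynomial.algHom_ext; intro i; fin_cases i <;>
          simp [AlgHom.comp_apply, map_sub, map_add, map_pow])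

noncomputable def Eequiv : MvPolynomial (Fin 2) ℂ ≃ₐ[ℂ] Polynomial (MvPolynomial (Fin 1) ℂ) :=
  (renameEquiv ℂ (Equiv.swap (0 : Fin 2) 1)).trans (MvPolynomial.finSuccEquiv ℂ 1)

lemma g1_irreducible (k m N : ℕ) (hk : k ≠ 0) (hco : Nat.Coprime m N) :
    Irreducible ((Polynomial.C (X 0) + Polynomial.X ^ k) ^ m - Polynomial.X ^ N
      : Polynomial (MvPolynomial (Fin 1) ℂ)) := by
  have h : Irreducible ((X 0)^m - (X 1)^N : MvPolynomial (Fin 2) ℂ) := lemB m N hco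
  have h2 := (MulEquiv.irreducible_iff (shiftEquiv k).toMulEquiv).mpr h
  have e : (shiftEquiv k).toMulEquiv ((X 0)^m - (X 1)^N : MvPolynomial (Fin 2) ℂ)
      = ((X 0 + X 1 ^ k)^m - (X 1)^N : MvPolynomial (Fin 2) ℂ) := by
    show (shiftEquiv k) _ = _
    simp [shiftEquiv, map_sub, map_pow]
  rw [e] at h2
  have h3 := (MulEquiv.irreducible_iff Eequiv.toMulEquiv).mpr h2
  have e3 : Eequiv.toMulEquiv ((X 0 + X 1 ^ k)^m - (X 1)^N : MvPolynomial (Fin 2) ℂ)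
      = ((Polynomial.C (X 0) + Polynomial.X ^ k)^m - Polynomial.X ^ N
      : Polynomial (MvPolynomial (Fin 1) ℂ)) := by
    show Eequiv _ = _
    have h1 : (X (1:Fin 2) : MvPolynomial (Fin 2) ℂ) = X ((0:Fin 1).succ) := rfl
    simp [Eequiv, map_sub, map_add, map_pow, rename_X, h1, finSuccEquiv_X_zero,
      finSuccEquiv_X_succ]
  rwa [e3] at h3

noncomputable def eEquiv : MvPolynomial (Fin 3) ℂ ≃ₐ[ℂ] Polynomial (MvPolynomial (Fin 2) ℂ) :=
  (renameEquiv ℂ (Equiv.swap (0 : Fin 3) 2)).trans (MvPolynomial.finSuccEquiv ℂ 2)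

lemma eEquiv_X0 : eEquiv (X 0) = Polynomial.C (X 1) := by
  have hs0 : Equiv.swap (0 : Fin 3) 2 0 = 2 := by decide
  have h2 : (X (2:Fin 3) : MvPolynomial (Fin 3) ℂ) = X ((1:Fin 2).succ) := rfl
  simp [eEquiv, rename_X, hs0, h2, finSuccEquiv_X_succ]

lemma eEquiv_X1 : eEquiv (X 1) = Polynomial.C (X 0) := by
  have hs1 : Equiv.swap (0 : Fin 3) 2 1 = 1 := by decide
  have h1 : (X (1:Fin 3) : MvPolynomial (Fin 3) ℂ) = X ((0:Fin 2).succ) := rfl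
  simp [eEquiv, rename_X, hs1, h1, finSuccEquiv_X_succ]

lemma eEquiv_X2 : eEquiv (X 2) = Polynomial.X := by
  have hs2 : Equiv.swap (0 : Fin 3) 2 2 = 0 := by decide
  simp [eEquiv, rename_X, hs2, finSuccEquiv_X_zero]

lemma eEquiv_G (l m : ℕ) :
    eEquiv (Gpoly l m) = Polynomial.C (X 1) *
      (Polynomial.C (X 0 * X 1 ^ l) + Polynomial.X ^ (l+1)) ^ m
      - Polynomial.X ^ ((l+1)*m+1) := by
  rw [Gpoly, map_sub, map_mul, map_pow, map_pow, map_add, map_mul, map_pow, map_pow,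
    eEquiv_X0, eEquiv_X1, eEquiv_X2]
  rw [← Polynomial.C_pow, ← Polynomial.C_mul]

noncomputable def uHom : MvPolynomial (Fin 2) ℂ →+* MvPolynomial (Fin 1) ℂ :=
  (aeval ![X 0, 1] : MvPolynomial (Fin 2) ℂ →ₐ[ℂ] MvPolynomial (Fin 1) ℂ).toRingHom

lemma chi_G (l m : ℕ) :
    Polynomial.map uHom (Polynomial.C (X 1) *
      (Polynomial.C (X 0 * X 1 ^ l) + Polynomial.X ^ (l+1)) ^ m
      - Polynomial.X ^ ((l+1)*m+1))
    = (Polynomial.C (X 0) + Polynomial.X ^ (l+1)) ^ m - Polynomial.X ^ ((l+1)*m+1) := by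
  simp [uHom, Polynomial.map_sub, Polynomial.map_mul, Polynomial.map_pow, Polynomial.map_add,
    Polynomial.map_C, Polynomial.map_X, map_mul, map_pow]

lemma G_irreducible (l m : ℕ) (hl : 1 ≤ l) (hm : 2 ≤ m) : Irreducible (Gpoly l m) := by
  set N := (l+1)*m+1 with hN
  have hco : Nat.Coprime m N := by
    have e : N = 1 + m * (l+1) := by rw [hN]; ring
    rw [e]
    exact (Nat.coprime_add_mul_left_right m 1 (l+1)).mpr (Nat.coprime_one_right m)
  have hg1 := g1_irreducible (l+1) m N (by omega) hco
  -- set up the polynomial picture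
  set W : Polynomial (MvPolynomial (Fin 2) ℂ) := Polynomial.C (X 1) *
      (Polynomial.C (X 0 * X 1 ^ l) + Polynomial.X ^ (l+1)) ^ m with hW
  set G₁ : Polynomial (MvPolynomial (Fin 2) ℂ) := W - Polynomial.X ^ N with hG₁
  have heG : eEquiv (Gpoly l m) = G₁ := eEquiv_G l m
  have hchi : Polynomial.map uHom G₁
      = (Polynomial.C (X 0) + Polynomial.X ^ (l+1)) ^ m - Polynomial.X ^ N := chi_G l m
  -- degree facts
  have hWdeg : W.natDegree ≤ (l+1)*m := by
    refine Polynomial.natDegree_mul_le.trans ?_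
    have h1 : (Polynomial.C (X 0 * X 1 ^ l) + Polynomial.X ^ (l+1) : Polynomial (MvPolynomial (Fin 2) ℂ)).natDegree
        ≤ l+1 := by
      refine Polynomial.natDegree_add_le_of_degree_le ?_ ?_
      · rw [Polynomial.natDegree_C]; omega
      · simp [Polynomial.natDegree_X_pow]
    rw [Polynomial.natDegree_C, zero_add, show (l+1)*m = m*(l+1) from Nat.mul_comm _ _]
    exact Polynomial.natDegree_pow_le.trans (Nat.mul_le_mul_left m h1)
  have hltN : W.natDegree < N := by rw [hN]; omega
  have hWdeg' : W.degree < (N : ℕ) :=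
    lt_of_le_of_lt Polynomial.degree_le_natDegree (by exact_mod_cast hltN)
  have hmon : (Polynomial.X ^ N - W).Monic := Polynomial.monic_X_pow_sub hWdeg'
  have hG₁neg : G₁ = -(Polynomial.X ^ N - W) := by rw [hG₁]; ring
  have hG₁0 : G₁ ≠ 0 := by
    rw [hG₁neg, neg_ne_zero]; exact hmon.ne_zero
  have hlcG₁ : G₁.leadingCoeff = -1 := by
    rw [hG₁neg, Polynomial.leadingCoeff_neg, hmon.leadingCoeff]
  -- key step
  have key : ∀ S T : Polynomial (MvPolynomial (Fin 2) ℂ), G₁ = S * T → IsUnit (Polynomial.map uHom S) → IsUnit S := by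
    intro S T hST hu
    have hS0 : S ≠ 0 := by rintro rfl; simp at hST; exact hG₁0 hST
    have hT0 : T ≠ 0 := by rintro rfl; simp at hST; exact hG₁0 hST
    have hlc : S.leadingCoeff * T.leadingCoeff = -1 := by
      rw [← Polynomial.leadingCoeff_mul, ← hST, hlcG₁]
    have hlcS : IsUnit S.leadingCoeff :=
      IsUnit.of_mul_eq_one (-T.leadingCoeff) (by rw [mul_neg, hlc, neg_neg])
    have hne : uHom S.leadingCoeff ≠ 0 := (hlcS.map uHom).ne_zero
    have hdegmap : (Polynomial.map uHom S).natDegree = S.natDegree :=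
      Polynomial.natDegree_map_of_leadingCoeff_ne_zero uHom hne
    have hdeg0 : S.natDegree = 0 := by
      rw [← hdegmap]
      exact Polynomial.natDegree_eq_zero_of_isUnit hu
    have hSC : S = Polynomial.C (S.coeff 0) := Polynomial.eq_C_of_natDegree_eq_zero hdeg0
    rw [hSC]
    rw [Polynomial.isUnit_C]
    have : S.coeff 0 = S.leadingCoeff := by
      rw [Polynomial.leadingCoeff, hdeg0]
    rw [this]
    exact hlcS
  -- assemble
  rw [← MulEquiv.irreducible_iff eEquiv.toMulEquiv]
  have : eEquiv.toMulEquiv (Gpoly l m) = G₁ := heG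
  rw [this]
  constructor
  · intro h
    exact hg1.not_isUnit (hchi ▸ h.map (Polynomial.mapRingHom uHom))
  · intro S T hST
    have : IsUnit (Polynomial.map uHom S) ∨ IsUnit (Polynomial.map uHom T) := by
      apply hg1.isUnit_or_isUnit
      rw [← hchi, hST, Polynomial.map_mul]
    exact this.imp (key S T hST) (key T S (by rw [hST, mul_comm]))

end GpolyAux

theorem stmt_4 (l m : ℕ) (hl : 1 ≤ l) (hm : 2 ≤ m) :
    (Gpoly l m).IsHomogeneous (l * m + m + 1) ∧ Irreducible (Gpoly l m) := by
  constructor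
  · have h1 : ((X 1 * X 0 ^ l + X 2 ^ (l+1)) : MvPolynomial (Fin 3) ℂ).IsHomogeneous (l+1) := by
      apply MvPolynomial.IsHomogeneous.add
      · have := (isHomogeneous_X ℂ (1 : Fin 3)).mul ((isHomogeneous_X ℂ (0 : Fin 3)).pow l)
        convert this using 1 <;> ring
      · have := (isHomogeneous_X ℂ (2 : Fin 3)).pow (l+1)
        convert this using 1 <;> ring
    have h2 : ((X 0 * (X 1 * X 0 ^ l + X 2 ^ (l+1)) ^ m) : MvPolynomial (Fin 3) ℂ).IsHomogeneous
        (1 + (l+1)*m) := by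
      have := (isHomogeneous_X ℂ (0 : Fin 3)).mul (h1.pow m)
      convert this using 1 <;> ring
    have h3 : ((X 2 ^ ((l+1)*m+1)) : MvPolynomial (Fin 3) ℂ).IsHomogeneous (1 + (l+1)*m) := by
      have := (isHomogeneous_X ℂ (2 : Fin 3)).pow ((l+1)*m+1)
      convert this using 1 <;> ring
    have := h2.sub h3
    rw [← Gpoly] at this
    convert this using 1 <;> [rfl; ring]
  · exact GpolyAux.G_irreducible l m hl hm
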